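/- arXiv:1306.3595 — 2 statements merged into one kernel-verified Lean document; each statement's English description precedes it below -/
import Mathlib

section
/- Let d ∈ (0,1), let F ∈ SR_d^2(0+), let t₀ ∈ ℝ and let s ≤ 0. Then for every ε > 0 with d + ε < 1, C^{d+ε,s}(t₀) ⊆ C_F^{d,s}(t₀); that is, every continuous function in the classical 2-microlocal space C^{d+ε,s}(t₀) lies in the 2-microlocal space with gauge F of parameters (d,s) at t₀. -/
open Set Filter MeasureTheory intervalIntegral Polynomial Metric
open scoped Topology

noncomputable section

/-- Mixed partial derivative `F^{(n,m)}`: `n` derivatives in the first (time) variable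
and `m` derivatives in the second variable. -/
noncomputable def pderiv2 (n m : ℕ) (F : ℝ → ℝ → ℝ) : ℝ → ℝ → ℝ :=
  fun s r => iteratedDeriv m (fun r' => iteratedDeriv n (fun s' => F s' r') s) r

/-- The closed half-plane `E = {(s,r) : r ≤ s}`. -/
def Ebar : Set (ℝ × ℝ) := {p | p.2 ≤ p.1}

/-- The open half-plane `Ẽ = {(s,r) : r < s}`. -/
def Etil : Set (ℝ × ℝ) := {p | p.2 < p.1}

/-- Membership in `C₊^{(k)}(E)` : continuous on `E`, `k` times continuously
differentiable on `Ẽ`, and strictly positive on `Ẽ`. -/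
structure CPlus (k : ℕ) (F : ℝ → ℝ → ℝ) : Prop where
  cont : ContinuousOn (fun p : ℝ × ℝ => F p.1 p.2) Ebar
  smooth : ContDiffOn ℝ k (fun p : ℝ × ℝ => F p.1 p.2) Etil
  pos : ∀ p ∈ Etil, 0 < F p.1 p.2

/-- `F` is a function of smooth variation of index `(ρ, k)` at the diagonal,
i.e. `F ∈ SR_ρ^k(0+)`. -/
structure SmoothVariation (ρ : ℝ) (k : ℕ) (F : ℝ → ℝ → ℝ) : Prop where
  mem : CPlus k F
  condA : ∀ K : Set ℝ, IsCompact K → ∀ ε > 0, ∃ h₀ > 0, ∀ h : ℝ, 0 < h → h < h₀ →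
    ∀ t ∈ K, |h * pderiv2 0 1 F t (t - h) / F t (t - h) + ρ| < ε
  condB : ∀ K : Set ℝ, IsCompact K → ∀ ε > 0, ∃ h₀ > 0, ∀ h : ℝ, 0 < h → h < h₀ →
    ∀ t ∈ K, |h * pderiv2 1 0 F (t + h) t / F (t + h) t - ρ| < ε
  condC : ∀ j : ℕ, 2 ≤ j → j ≤ k → ∀ K : Set ℝ, IsCompact K → ∀ ε > 0, ∃ h₀ > 0,
    ∀ h : ℝ, 0 < h → h < h₀ → ∀ t ∈ K,
      |h ^ j * pderiv2 (j - 1) 1 F t (t - h) / F t (t - h)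
        + ∏ i ∈ Finset.range j, (ρ - (i : ℝ))| < ε
  condD : ∀ K : Set ℝ, IsCompact K → ∀ ε > 0, ∃ h₀ > 0, ∀ h : ℝ, 0 < h → h < h₀ →
    ∀ t ∈ K, |h ^ 2 * pderiv2 0 2 F t (t - h) / F t (t - h) - ρ * (ρ - 1)| < ε

/-- The 2-microlocal space with gauge function `F`, `C_F^{d,s'}(t₀)`. -/
def MemCF (F : ℝ → ℝ → ℝ) (d s' t₀ : ℝ) (g : ℝ → ℝ) : Prop :=
  ∃ C > 0, ∃ h > 0, ∃ P : Polynomial ℝ, (P.natDegree : ℤ) ≤ ⌊d - s'⌋ ∧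
    ∀ u v : ℝ, u ∈ Metric.ball t₀ h → v ∈ Metric.ball t₀ h → v ≤ u →
      |(g u - P.eval u) - (g v - P.eval v)| ≤
        C * F u v * (|u - t₀| + |v - t₀|) ^ (-s')

/-- The classical 2-microlocal space `C^{σ,s'}(t₀)`. -/
def MemC2ML (σ s' t₀ : ℝ) (g : ℝ → ℝ) : Prop :=
  ∃ C > 0, ∃ h > 0, ∃ P : Polynomial ℝ, (P.natDegree : ℤ) ≤ ⌊σ - s'⌋ ∧
    ∀ u v : ℝ, u ∈ Metric.ball t₀ h → v ∈ Metric.ball t₀ h →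
      |(g u - P.eval u) - (g v - P.eval v)| ≤
        C * |u - v| ^ σ * (|u - t₀| + |v - t₀|) ^ (-s')

/-- The pointwise Hölder space `C^l(t₀)`. -/
def PtwHolder (l t₀ : ℝ) (g : ℝ → ℝ) : Prop :=
  ∃ C > 0, ∃ h > 0, ∃ P : Polynomial ℝ, (P.natDegree : ℤ) ≤ ⌊l⌋ ∧
    ∀ t ∈ Metric.ball t₀ h, |g t - P.eval t| ≤ C * |t - t₀| ^ l

/-- The pointwise Hölder exponent `h_g(t₀) = sup{l : g ∈ C^l(t₀)}`. -/
def holderExp (g : ℝ → ℝ) (t₀ : ℝ) : ℝ := sSup {l | PtwHolder l t₀ g}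

/-- The Hölder exponent with gauge function `F`,
`h̄^d_g(t₀) = d − inf{s' ≤ 0 : g ∈ C_F^{d,s'}(t₀)}`. -/
def holderGaugeExp (F : ℝ → ℝ → ℝ) (d : ℝ) (g : ℝ → ℝ) (t₀ : ℝ) : ℝ :=
  d - sInf {s' | s' ≤ 0 ∧ MemCF F d s' t₀ g}

/-- The 2-microlocal frontier `σ_{g,t₀}(s') = sup{σ ∈ [0,1) : g ∈ C^{σ,s'}(t₀)}`. -/
def frontier2ML (g : ℝ → ℝ) (t₀ s' : ℝ) : ℝ :=
  sSup {σ | σ ∈ Set.Ico (0:ℝ) 1 ∧ MemC2ML σ s' t₀ g}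

/-- `g` is càdlàg on `[0,∞)`: right-continuous with left limits. -/
def CadlagOn (g : ℝ → ℝ) : Prop :=
  (∀ t : ℝ, 0 ≤ t → Tendsto g (𝓝[Set.Ici t] t) (𝓝 (g t))) ∧
  (∀ t : ℝ, 0 < t → ∃ L : ℝ, Tendsto g (𝓝[Set.Iio t] t) (𝓝 L))

lemma isOpen_Etil : IsOpen Etil := isOpen_lt continuous_snd continuous_fst

lemma hasDerivAt_psi (F : ℝ → ℝ → ℝ)
    (hF : ContDiffOn ℝ 2 (fun p : ℝ × ℝ => F p.1 p.2) Etil) (u x : ℝ) (hx : 0 < x) :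
    HasDerivAt (fun y => F u (u - y)) (-(pderiv2 0 1 F u (u - x))) x := by
  have hmem : ((u, u - x) : ℝ × ℝ) ∈ Etil := by simp [Etil]; linarith
  have hdiff : DifferentiableAt ℝ (fun p : ℝ × ℝ => F p.1 p.2) (u, u - x) :=
    (hF.contDiffAt (isOpen_Etil.mem_nhds hmem)).differentiableAt (by norm_num)
  have hL := hdiff.hasFDerivAt
  set L := fderiv ℝ (fun p : ℝ × ℝ => F p.1 p.2) (u, u - x) with hLdef
  have hcurve : HasDerivAt (fun y : ℝ => ((u : ℝ), u - y)) ((0 : ℝ), (-1 : ℝ)) x := by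
    simpa using (hasDerivAt_const x u).prodMk ((hasDerivAt_const x u).sub (hasDerivAt_id x))
  have hpsi : HasDerivAt (fun y => F u (u - y)) (L (0, -1)) x :=
    by exact hL.comp_hasDerivAt x hcurve
  have hline : HasDerivAt (fun r' : ℝ => F u r') (L (0, 1)) (u - x) := by
    have hcurve2 : HasDerivAt (fun r' : ℝ => ((u : ℝ), r')) ((0 : ℝ), (1 : ℝ)) (u - x) := by
      simpa using (hasDerivAt_const (u - x) u).prodMk (hasDerivAt_id (u - x))
    exact hL.comp_hasDerivAt _ hcurve2
  have hp : pderiv2 0 1 F u (u - x) = L (0, 1) := by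
    simp only [pderiv2, iteratedDeriv_one, iteratedDeriv_zero]
    exact hline.deriv
  have hneg : L ((0 : ℝ), (-1 : ℝ)) = -(L (0, 1)) := by
    have : ((0 : ℝ), (-1 : ℝ)) = -((0 : ℝ), (1 : ℝ)) := by simp [Prod.ext_iff]
    rw [this, map_neg]
  rw [hp]; rw [hneg] at hpsi; exact hpsi

lemma gauge_lower (d : ℝ) (F : ℝ → ℝ → ℝ) (hF : SmoothVariation d 2 F) (t₀ ε' : ℝ)
    (hε' : 0 < ε') :
    ∃ c > 0, ∃ r > 0, r ≤ 1/2 ∧ ∀ u v : ℝ, u ∈ ball t₀ r → v ∈ ball t₀ r → v < u →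
      c * (u - v) ^ (d + ε') ≤ F u v := by
  set α := d + ε' with hα
  obtain ⟨h₁, hh₁, hA⟩ := hF.condA (closedBall t₀ 1) (isCompact_closedBall t₀ 1) ε' hε'
  set H := h₁ / 2 with hH
  have hHpos : 0 < H := by positivity
  have hHlt : H < h₁ := by linarith
  -- continuity of t ↦ F t (t - H) and minimum over closed ball
  have hcont : Continuous fun t : ℝ => F t (t - H) := by
    rw [continuous_iff_continuousAt]
    intro t
    have hmem : ((t, t - H) : ℝ × ℝ) ∈ Etil := by simp [Etil]; linarith
    have h2 : ContinuousAt (fun p : ℝ × ℝ => F p.1 p.2) (t, t - H) :=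
      (hF.mem.smooth.continuousOn).continuousAt (isOpen_Etil.mem_nhds hmem)
    have h3 : ContinuousAt (fun t : ℝ => ((t, t - H) : ℝ × ℝ)) t := by fun_prop
    exact ContinuousAt.comp (f := fun t : ℝ => (t, t - H)) (x := t) h2 h3
  obtain ⟨ts, htsmem, hmin⟩ := (isCompact_closedBall t₀ 1).exists_isMinOn
    (by simp : (closedBall t₀ 1).Nonempty) hcont.continuousOn
  set m := F ts (ts - H) with hm
  have hmpos : 0 < m := hF.mem.pos (ts, ts - H) (by simp [Etil]; linarith)
  refine ⟨m / H ^ α, by positivity, min (1/2) (H/2), by positivity, min_le_left _ _, ?_⟩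
  intro u v hu hv hvu
  set a := u - v with ha
  have hapos : 0 < a := by simpa [ha] using sub_pos.mpr hvu
  have hu1 : u ∈ closedBall t₀ 1 := by
    have := mem_ball.mp hu
    have h12 : min (1/2) (H/2) ≤ 1/2 := min_le_left _ _
    rw [mem_closedBall]
    calc dist u t₀ ≤ min (1/2) (H/2) := le_of_lt this
    _ ≤ 1 := by linarith
  have haH : a ≤ H := by
    have h1 := mem_ball.mp hu
    have h2 := mem_ball.mp hv
    have h3 : min (1/2) (H/2) ≤ H/2 := min_le_right _ _
    have : |u - t₀| < min (1/2) (H/2) := h1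
    have : |v - t₀| < min (1/2) (H/2) := h2
    have h4 : a ≤ |u - t₀| + |v - t₀| := by
      rw [ha]
      calc u - v = (u - t₀) - (v - t₀) := by ring
      _ ≤ |u - t₀ - (v - t₀)| := le_abs_self _
      _ ≤ |u - t₀| + |v - t₀| := abs_sub _ _
    linarith [h1, h2]
  -- positivity of ψ
  have hψpos : ∀ y : ℝ, 0 < y → 0 < F u (u - y) := fun y hy =>
    hF.mem.pos (u, u - y) (by simp [Etil]; linarith)
  -- derivative of Φ
  have hΦ : ∀ y : ℝ, 0 < y →
      HasDerivAt (fun z => Real.log (F u (u - z)) - α * Real.log z)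
        (-(pderiv2 0 1 F u (u - y)) / F u (u - y) - α * y⁻¹) y := by
    intro y hy
    have h1 := (hasDerivAt_psi F hF.mem.smooth u y hy).log (ne_of_gt (hψpos y hy))
    have h2 := (Real.hasDerivAt_log (ne_of_gt hy)).const_mul α
    exact h1.sub h2
  have hderivneg : ∀ y : ℝ, 0 < y → y < h₁ →
      -(pderiv2 0 1 F u (u - y)) / F u (u - y) - α * y⁻¹ ≤ 0 := by
    intro y hy hyh
    have hcond := hA y hy hyh u hu1
    set G := pderiv2 0 1 F u (u - y)
    set ψy := F u (u - y)
    have hψ : 0 < ψy := hψpos y hy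
    have h5 : -(d + ε') < y * G / ψy := by
      have := abs_lt.mp hcond; linarith [this.1]
    have hinv : y * y⁻¹ = 1 := mul_inv_cancel₀ (ne_of_gt hy)
    have hq : y * G / ψy = y * (G / ψy) := mul_div_assoc y G ψy
    rw [hq] at h5
    have hGd : -G / ψy = -(G / ψy) := neg_div ψy G
    have h6 : -(d + ε') * y⁻¹ < y * (G / ψy) * y⁻¹ :=
      mul_lt_mul_of_pos_right h5 (inv_pos.mpr hy)
    have h7 : y * (G / ψy) * y⁻¹ = G / ψy := by
      field_simp
    rw [hα, hGd]
    rw [h7] at h6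
    linarith
  -- antitone
  have hanti : AntitoneOn (fun z => Real.log (F u (u - z)) - α * Real.log z) (Icc a H) := by
    apply antitoneOn_of_deriv_nonpos (convex_Icc a H)
    · intro x hx
      exact ((hΦ x (lt_of_lt_of_le hapos hx.1)).continuousAt).continuousWithinAt
    · intro x hx
      rw [interior_Icc] at hx
      exact ((hΦ x (lt_trans hapos hx.1)).differentiableAt).differentiableWithinAt
    · intro x hx
      rw [interior_Icc] at hx
      have hx0 : 0 < x := lt_trans hapos hx.1
      rw [(hΦ x hx0).deriv]
      exact hderivneg x hx0 (lt_trans hx.2 hHlt)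
  have hkey : Real.log (F u (u - H)) - α * Real.log H ≤
      Real.log (F u (u - a)) - α * Real.log a :=
    hanti ⟨le_refl a, haH⟩ ⟨haH, le_refl H⟩ haH
  -- conclude
  have hψa : 0 < F u (u - a) := hψpos a hapos
  have hψH : 0 < F u (u - H) := hψpos H hHpos
  have hlog : Real.log (F u (u - H) * (a / H) ^ α) ≤ Real.log (F u (u - a)) := by
    rw [Real.log_mul (ne_of_gt hψH) (ne_of_gt (Real.rpow_pos_of_pos (by positivity) α)),
      Real.log_rpow (by positivity), Real.log_div (ne_of_gt hapos) (ne_of_gt hHpos)]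
    linarith [hkey]
  have hstep : F u (u - H) * (a / H) ^ α ≤ F u (u - a) :=
    (Real.log_le_log_iff (by positivity) hψa).mp hlog
  have hmle : m ≤ F u (u - H) := hmin hu1
  have hfin : m / H ^ α * a ^ α ≤ F u (u - a) := by
    have h7 : (a / H : ℝ) ^ α = a ^ α / H ^ α :=
      Real.div_rpow (le_of_lt hapos) (le_of_lt hHpos) α
    have h8 : m * (a ^ α / H ^ α) ≤ F u (u - H) * (a ^ α / H ^ α) := by
      apply mul_le_mul_of_nonneg_right hmle
      positivity
    calc m / H ^ α * a ^ α = m * (a ^ α / H ^ α) := by ring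
    _ ≤ F u (u - H) * (a ^ α / H ^ α) := h8
    _ = F u (u - H) * (a / H) ^ α := by rw [h7]
    _ ≤ F u (u - a) := hstep
  have : u - a = v := by rw [ha]; ring
  rwa [this] at hfin

lemma abs_pow_sub_pow_le' (R a b : ℝ) (hR : 0 ≤ R) (ha : |a| ≤ R) (hb : |b| ≤ R) :
    ∀ n : ℕ, |a ^ (n + 1) - b ^ (n + 1)| ≤ (n + 1) * R ^ n * |a - b| := by
  intro n
  induction n with
  | zero => simp
  | succ k ih =>
    have key : a ^ (k + 2) - b ^ (k + 2) = a * (a ^ (k + 1) - b ^ (k + 1)) + (a - b) * b ^ (k + 1) := by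
      ring
    have hb1 : |b ^ (k + 1)| ≤ R ^ (k + 1) := by
      rw [abs_pow]; exact pow_le_pow_left₀ (abs_nonneg b) hb (k + 1)
    calc |a ^ (k + 2) - b ^ (k + 2)|
        ≤ |a * (a ^ (k + 1) - b ^ (k + 1))| + |(a - b) * b ^ (k + 1)| := by
          rw [key]; exact abs_add_le _ _
      _ = |a| * |a ^ (k + 1) - b ^ (k + 1)| + |a - b| * |b ^ (k + 1)| := by
          rw [abs_mul, abs_mul]
      _ ≤ R * ((k + 1) * R ^ k * |a - b|) + |a - b| * R ^ (k + 1) := by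
          apply add_le_add
          · exact mul_le_mul ha ih (abs_nonneg _) hR
          · exact mul_le_mul_of_nonneg_left hb1 (abs_nonneg _)
      _ = ((k : ℝ) + 1 + 1) * R ^ (k + 1) * |a - b| := by ring
      _ = ((k + 1 : ℕ) + 1) * R ^ (k + 1) * |a - b| := by push_cast; ring

lemma F_diag_nonneg (F : ℝ → ℝ → ℝ) (hC : CPlus 2 F) (u : ℝ) : 0 ≤ F u u := by
  have hc : ContinuousWithinAt (fun p : ℝ × ℝ => F p.1 p.2) Ebar (u, u) :=
    hC.cont (u, u) (by simp [Ebar])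
  have hmap : Tendsto (fun h : ℝ => ((u, u - h) : ℝ × ℝ)) (𝓝[>] 0) (𝓝[Ebar] (u, u)) := by
    rw [tendsto_nhdsWithin_iff]
    constructor
    · have : Tendsto (fun h : ℝ => ((u, u - h) : ℝ × ℝ)) (𝓝 0) (𝓝 (u, u - 0)) := by
        apply Continuous.tendsto
        fun_prop
      simpa using this.mono_left nhdsWithin_le_nhds
    · filter_upwards [self_mem_nhdsWithin] with h hh
      simp only [Ebar, Set.mem_setOf_eq]
      have : (0 : ℝ) < h := hh
      linarith
  have ht : Tendsto (fun h : ℝ => F u (u - h)) (𝓝[>] 0) (𝓝 (F u u)) := hc.tendsto.comp hmap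
  refine ge_of_tendsto ht ?_
  filter_upwards [self_mem_nhdsWithin] with h hh
  have : (0 : ℝ) < h := hh
  exact le_of_lt (hC.pos (u, u - h) (by simp [Etil]; linarith))

lemma rpow_chain (M : ℕ) (h R α s β : ℝ) (hh : 0 < h) (hR1 : R ≤ 1) (hhR : h ≤ R)
    (hα1 : α ≤ 1) (hβ : 0 ≤ β) (hsum : (M : ℝ) + 1 - α = -s + β) :
    R ^ M * h ≤ h ^ α * R ^ (-s) := by
  have hR0 : 0 < R := lt_of_lt_of_le hh hhR
  have e1 : h = h ^ α * h ^ (1 - α) := by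
    rw [← Real.rpow_add hh]
    norm_num
  have e2 : h ^ (1 - α) ≤ R ^ (1 - α) := Real.rpow_le_rpow hh.le hhR (by linarith)
  have e3 : (R : ℝ) ^ (M : ℕ) = R ^ ((M : ℝ)) := (Real.rpow_natCast R M).symm
  calc R ^ M * h = (h ^ α * h ^ (1 - α)) * R ^ ((M : ℝ)) := by rw [← e1, e3]; ring
    _ ≤ (h ^ α * R ^ (1 - α)) * R ^ ((M : ℝ)) := by
        apply mul_le_mul_of_nonneg_right _ (Real.rpow_nonneg hR0.le _)
        exact mul_le_mul_of_nonneg_left e2 (Real.rpow_nonneg hh.le α)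
    _ = h ^ α * (R ^ ((1 - α) + (M : ℝ))) := by rw [Real.rpow_add hR0]; ring
    _ = h ^ α * (R ^ (-s) * R ^ β) := by
        have heq : (1 - α) + (M : ℝ) = -s + β := by linarith
        rw [heq, Real.rpow_add hR0]
    _ ≤ h ^ α * (R ^ (-s) * 1) := by
        gcongr
        exact Real.rpow_le_one hR0.le hR1 hβ
    _ = h ^ α * R ^ (-s) := by ring
lemma truncation (P : Polynomial ℝ) (t₀ : ℝ) (M : ℕ) :
    ∃ Q : Polynomial ℝ, Q.natDegree ≤ M ∧ ∃ CT : ℝ, 0 ≤ CT ∧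
      ∀ x y R : ℝ, 0 ≤ R → R ≤ 1 → |x - t₀| ≤ R → |y - t₀| ≤ R →
        |(P.eval x - Q.eval x) - (P.eval y - Q.eval y)| ≤ CT * R ^ M * |x - y| := by
  classical
  set P₁ := P.comp (X + C t₀) with hP₁def
  set D := P₁.natDegree with hD
  set T := ∑ n ∈ Finset.Ioc M D, C (P₁.coeff n) * X ^ n with hT
  set Q₁ := P₁ - T with hQ₁
  set Q := Q₁.comp (X - C t₀) with hQdef
  have hP₁eval : ∀ x : ℝ, P₁.eval (x - t₀) = P.eval x := by
    intro x; simp [hP₁def, eval_comp]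
  have hTeval : ∀ a : ℝ, T.eval a = ∑ n ∈ Finset.Ioc M D, P₁.coeff n * a ^ n := by
    intro a; simp [hT, eval_finset_sum]
  have hQeval : ∀ x : ℝ, Q.eval x = P.eval x - T.eval (x - t₀) := by
    intro x
    rw [hQdef, eval_comp]
    simp only [eval_sub, eval_X, eval_C]
    rw [hQ₁]
    simp only [eval_sub]
    rw [hP₁eval]
  -- degree
  have hTcoeff : ∀ N : ℕ, T.coeff N = if N ∈ Finset.Ioc M D then P₁.coeff N else 0 := by
    intro N
    rw [hT, finset_sum_coeff]
    simp only [coeff_C_mul, coeff_X_pow, mul_ite, mul_one, mul_zero]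
    exact Finset.sum_ite_eq (Finset.Ioc M D) N (fun n => P₁.coeff n)
  have hQ₁deg : Q₁.natDegree ≤ M := by
    rw [natDegree_le_iff_coeff_eq_zero]
    intro N hN
    rw [hQ₁, coeff_sub, hTcoeff N]
    by_cases hND : N ≤ D
    · rw [if_pos (Finset.mem_Ioc.mpr ⟨hN, hND⟩)]; ring
    · rw [if_neg (by simp [Finset.mem_Ioc]; intro _; omega), coeff_eq_zero_of_natDegree_lt (by omega)]
      ring
  have hQdeg : Q.natDegree ≤ M := by
    rw [hQdef, natDegree_comp, natDegree_X_sub_C, mul_one]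
    exact hQ₁deg
  refine ⟨Q, hQdeg, ∑ n ∈ Finset.Ioc M D, |P₁.coeff n| * n, ?_, ?_⟩
  · apply Finset.sum_nonneg
    intro n _
    positivity
  · intro x y R hR hR1 hx hy
    have hdiff : ∀ z : ℝ, P.eval z - Q.eval z = T.eval (z - t₀) := by
      intro z; rw [hQeval]; ring
    rw [hdiff, hdiff]
    set a := x - t₀ with ha
    set b := y - t₀ with hb
    have hab : a - b = x - y := by rw [ha, hb]; ring
    have hsum : T.eval a - T.eval b = ∑ n ∈ Finset.Ioc M D,
        (P₁.coeff n * a ^ n - P₁.coeff n * b ^ n) := by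
      rw [hTeval, hTeval, ← Finset.sum_sub_distrib]
    rw [hsum]
    calc |∑ n ∈ Finset.Ioc M D, (P₁.coeff n * a ^ n - P₁.coeff n * b ^ n)|
        ≤ ∑ n ∈ Finset.Ioc M D, |P₁.coeff n * a ^ n - P₁.coeff n * b ^ n| :=
          Finset.abs_sum_le_sum_abs _ _
      _ ≤ ∑ n ∈ Finset.Ioc M D, (|P₁.coeff n| * n) * (R ^ M * |x - y|) := by
          apply Finset.sum_le_sum
          intro n hn
          rw [Finset.mem_Ioc] at hn
          obtain ⟨k, hk⟩ : ∃ k, n = k + 1 := ⟨n - 1, by omega⟩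
          subst hk
          have hMk : M ≤ k := by omega
          have h1 : |a ^ (k + 1) - b ^ (k + 1)| ≤ (k + 1) * R ^ k * |a - b| :=
            abs_pow_sub_pow_le' R a b hR hx hy k
          have h2 : R ^ k ≤ R ^ M := pow_le_pow_of_le_one hR hR1 hMk
          have h3 : |a ^ (k + 1) - b ^ (k + 1)| ≤ (k + 1) * R ^ M * |a - b| := by
            calc |a ^ (k + 1) - b ^ (k + 1)| ≤ (k + 1) * R ^ k * |a - b| := h1
              _ ≤ (k + 1) * R ^ M * |a - b| := by
                  apply mul_le_mul_of_nonneg_right _ (abs_nonneg _)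
                  apply mul_le_mul_of_nonneg_left h2 (by positivity)
          calc |P₁.coeff (k + 1) * a ^ (k + 1) - P₁.coeff (k + 1) * b ^ (k + 1)|
              = |P₁.coeff (k + 1)| * |a ^ (k + 1) - b ^ (k + 1)| := by
                rw [← mul_sub, abs_mul]
            _ ≤ |P₁.coeff (k + 1)| * ((k + 1) * R ^ M * |a - b|) :=
                mul_le_mul_of_nonneg_left h3 (abs_nonneg _)
            _ = (|P₁.coeff (k + 1)| * ((k + 1 : ℕ) : ℝ)) * (R ^ M * |x - y|) := by
                rw [← hab]; push_cast; ring
      _ = (∑ n ∈ Finset.Ioc M D, |P₁.coeff n| * n) * (R ^ M * |x - y|) :=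
          (Finset.sum_mul _ _ _).symm
      _ = (∑ n ∈ Finset.Ioc M D, |P₁.coeff n| * n) * R ^ M * |x - y| := by ring

/-- Theorem 2.1(c): `C^{d+ε,s}(t₀) ⊆ C_F^{d,s}(t₀)` for every `ε > 0`
with `d + ε < 1`. -/
theorem classical_subset_microlocal_gauge
    (d : ℝ) (hd : d ∈ Set.Ioo (0:ℝ) 1) (F : ℝ → ℝ → ℝ)
    (hF : SmoothVariation d 2 F) (t₀ : ℝ) (s : ℝ) (hs : s ≤ 0)
    (ε : ℝ) (hε : 0 < ε) (hεd : d + ε < 1)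
    (g : ℝ → ℝ) (hg : Continuous g) (hmem : MemC2ML (d + ε) s t₀ g) :
    MemCF F d s t₀ g := by
  obtain ⟨C₀, hC₀, h₀, hh₀, P, hPdeg, hPbd⟩ := hmem
  have hds : 0 < d - s := by have := hd.1; linarith
  have hfl0 : (0:ℤ) ≤ ⌊d - s⌋ := Int.floor_nonneg.mpr hds.le
  set M := (⌊d - s⌋).toNat with hM
  have hMZ : (M : ℤ) = ⌊d - s⌋ := Int.toNat_of_nonneg hfl0
  have hMle : (M : ℝ) ≤ d - s := by
    have h1 := Int.floor_le (d - s)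
    rw [← hMZ] at h1; exact_mod_cast h1
  have hMlt : d - s < (M : ℝ) + 1 := by
    have h1 := Int.lt_floor_add_one (d - s)
    rw [← hMZ] at h1; push_cast at h1; exact h1
  set δ := (M : ℝ) + 1 - (d - s) with hδ
  have hδpos : 0 < δ := by rw [hδ]; linarith
  set ε' := min ε (δ / 2) with hε'
  have hε'pos : 0 < ε' := lt_min hε (by linarith)
  have hε'ε : ε' ≤ ε := min_le_left _ _
  have hε'δ : ε' ≤ δ / 2 := min_le_right _ _
  have hα1 : d + ε' ≤ 1 := by linarith
  set β := (M : ℝ) + 1 + s - d - ε' with hβ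
  have hβpos : 0 < β := by rw [hβ]; rw [hδ] at hε'δ; linarith
  obtain ⟨c, hc, r, hr, hr12, hlow⟩ := gauge_lower d F hF t₀ ε' hε'pos
  obtain ⟨Q, hQdeg, CT, hCT, hTbd⟩ := truncation P t₀ M
  set ρ := min r h₀ with hρ
  have hρpos : 0 < ρ := lt_min hr hh₀
  refine ⟨(C₀ + CT + 1) / c, by positivity, ρ, hρpos, Q, ?_, ?_⟩
  · calc (Q.natDegree : ℤ) ≤ (M : ℤ) := by exact_mod_cast hQdeg
    _ = ⌊d - s⌋ := hMZ
  · intro u v hu hv hvu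
    set R := |u - t₀| + |v - t₀| with hRdef
    have hRnn : 0 ≤ R := by positivity
    have hRs : 0 ≤ R ^ (-s) := Real.rpow_nonneg hRnn _
    rcases eq_or_lt_of_le hvu with heq | hlt
    · rw [← heq]
      simp only [sub_self, abs_zero]
      exact mul_nonneg (mul_nonneg (by positivity) (F_diag_nonneg F hF.mem v)) hRs
    · have hur : u ∈ ball t₀ r := ball_subset_ball (min_le_left r h₀) hu
      have hvr : v ∈ ball t₀ r := ball_subset_ball (min_le_left r h₀) hv
      have huh₀ : u ∈ ball t₀ h₀ := ball_subset_ball (min_le_right r h₀) hu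
      have hvh₀ : v ∈ ball t₀ h₀ := ball_subset_ball (min_le_right r h₀) hv
      have hFlow := hlow u v hur hvr hlt
      set h := u - v with hh
      have hhpos : 0 < h := by rw [hh]; linarith
      have habs : |u - v| = h := abs_of_pos hhpos
      have hhR : h ≤ R := by
        rw [hRdef, hh]
        calc u - v = (u - t₀) - (v - t₀) := by ring
          _ ≤ |(u - t₀) - (v - t₀)| := le_abs_self _
          _ ≤ |u - t₀| + |v - t₀| := abs_sub _ _
      have hu2 : |u - t₀| < r := by
        have := mem_ball.mp hur; rwa [Real.dist_eq] at this
      have hv2 : |v - t₀| < r := by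
        have := mem_ball.mp hvr; rwa [Real.dist_eq] at this
      have hR1 : R < 1 := by rw [hRdef]; linarith
      have hRpos : 0 < R := lt_of_lt_of_le hhpos hhR
      have hFpos : 0 < F u v := hF.mem.pos (u, v) hlt
      have hmain := hPbd u v huh₀ hvh₀
      have hm2 : |u - v| ^ (d + ε) ≤ h ^ (d + ε') := by
        rw [habs]
        exact Real.rpow_le_rpow_of_exponent_ge hhpos
          (le_of_lt (lt_of_le_of_lt hhR hR1)) (by linarith)
      have htail := hTbd u v R hRnn hR1.le
        (le_add_of_nonneg_right (abs_nonneg _)) (le_add_of_nonneg_left (abs_nonneg _))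
      have hchain : R ^ M * h ≤ h ^ (d + ε') * R ^ (-s) :=
        rpow_chain M h R (d + ε') s β hhpos hR1.le hhR hα1 hβpos.le (by rw [hβ]; ring)
      have hkey : h ^ (d + ε') ≤ F u v / c := by
        rw [le_div_iff₀ hc]
        calc h ^ (d + ε') * c = c * h ^ (d + ε') := by ring
          _ ≤ F u v := hFlow
      have hident : (g u - Q.eval u) - (g v - Q.eval v) =
          ((g u - P.eval u) - (g v - P.eval v)) +
          ((P.eval u - Q.eval u) - (P.eval v - Q.eval v)) := by ring
      calc |(g u - Q.eval u) - (g v - Q.eval v)|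
          ≤ |(g u - P.eval u) - (g v - P.eval v)| +
            |(P.eval u - Q.eval u) - (P.eval v - Q.eval v)| := by
            rw [hident]; exact abs_add_le _ _
        _ ≤ C₀ * |u - v| ^ (d + ε) * R ^ (-s) + CT * R ^ M * |u - v| :=
            add_le_add hmain htail
        _ ≤ C₀ * (F u v / c) * R ^ (-s) + CT * (h ^ (d + ε') * R ^ (-s)) := by
            apply add_le_add
            · apply mul_le_mul_of_nonneg_right _ hRs
              exact mul_le_mul_of_nonneg_left (le_trans hm2 hkey) hC₀.le
            · rw [habs]
              calc CT * R ^ M * h = CT * (R ^ M * h) := by ring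
                _ ≤ CT * (h ^ (d + ε') * R ^ (-s)) :=
                    mul_le_mul_of_nonneg_left hchain hCT
        _ ≤ C₀ * (F u v / c) * R ^ (-s) + CT * ((F u v / c) * R ^ (-s)) := by
            apply add_le_add_right
            exact mul_le_mul_of_nonneg_left (mul_le_mul_of_nonneg_right hkey hRs) hCT
        _ = (C₀ + CT) / c * F u v * R ^ (-s) := by ring
        _ ≤ (C₀ + CT + 1) / c * F u v * R ^ (-s) := by
            apply mul_le_mul_of_nonneg_right _ hRs
            apply mul_le_mul_of_nonneg_right _ hFpos.le
            exact (div_le_div_iff_of_pos_right hc).mpr (by linarith)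
end
end

section
/- Let d ∈ (0,1), let F ∈ SR_d^2(0+) and set f(t,r) = F^{(0,1)}(t,r) for r < t. For t ∈ [0,1], v ∈ (0,1] and δ > 0 define f_δ(t,v) = f(t+δ, t+δ−δv)/f(t+δ, t). Then lim_{δ↓0} sup_{0 ≤ t ≤ 1} | ∫₀¹ |f_δ(t,v)| dv − 1/d | = 0. -/
open Set Filter MeasureTheory intervalIntegral Polynomial Metric
open scoped Topology

noncomputable section

lemma aux_hasDeriv {F : ℝ → ℝ → ℝ}
    (hs : ContDiffOn ℝ 2 (fun p : ℝ × ℝ => F p.1 p.2) Etil)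
    {s r : ℝ} (h : r < s) :
    HasDerivAt (fun r' => F s r')
      (fderiv ℝ (fun p : ℝ × ℝ => F p.1 p.2) (s, r) (0, 1)) r := by
  have hmem : (s, r) ∈ Etil := h
  have hca : ContDiffAt ℝ 2 (fun p : ℝ × ℝ => F p.1 p.2) (s, r) :=
    (hs (s, r) hmem).contDiffAt (isOpen_Etil.mem_nhds hmem)
  have hd : DifferentiableAt ℝ (fun p : ℝ × ℝ => F p.1 p.2) (s, r) :=
    hca.differentiableAt (by norm_num)
  have hinner : HasDerivAt (fun r' : ℝ => ((s : ℝ), r')) ((0 : ℝ), (1 : ℝ)) r :=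
    (hasDerivAt_const r s).prodMk (hasDerivAt_id r)
  exact hd.hasFDerivAt.comp_hasDerivAt r hinner

lemma pderiv2_01_eq {F : ℝ → ℝ → ℝ}
    (hs : ContDiffOn ℝ 2 (fun p : ℝ × ℝ => F p.1 p.2) Etil)
    {s r : ℝ} (h : r < s) :
    pderiv2 0 1 F s r = fderiv ℝ (fun p : ℝ × ℝ => F p.1 p.2) (s, r) (0, 1) := by
  have := (aux_hasDeriv hs h).deriv
  simpa [pderiv2] using this

lemma hasDerivAt_snd {F : ℝ → ℝ → ℝ}
    (hs : ContDiffOn ℝ 2 (fun p : ℝ × ℝ => F p.1 p.2) Etil)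
    {s r : ℝ} (h : r < s) :
    HasDerivAt (fun r' => F s r') (pderiv2 0 1 F s r) r := by
  rw [pderiv2_01_eq hs h]; exact aux_hasDeriv hs h

lemma fcont {F : ℝ → ℝ → ℝ}
    (hs : ContDiffOn ℝ 2 (fun p : ℝ × ℝ => F p.1 p.2) Etil) :
    ContinuousOn (fun p : ℝ × ℝ => pderiv2 0 1 F p.1 p.2) Etil := by
  have hfc : ContinuousOn (fderiv ℝ (fun p : ℝ × ℝ => F p.1 p.2)) Etil :=
    hs.continuousOn_fderiv_of_isOpen isOpen_Etil (by norm_num)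
  have h2 : ContinuousOn
      (fun p : ℝ × ℝ => fderiv ℝ (fun q : ℝ × ℝ => F q.1 q.2) p ((0 : ℝ), (1 : ℝ)))
      Etil := hfc.clm_apply continuousOn_const
  refine h2.congr ?_
  intro p hp
  exact pderiv2_01_eq hs hp

/-- Gronwall-type comparison: if `-f(s,s-h) ≥ (d/2) F(s,s-h)/h` on `(0,b]` then
`F(s,s-h) ≤ F(s,s-b) (h/b)^(d/2)`. -/
lemma comparison {d : ℝ} (hd : 0 < d) {F f : ℝ → ℝ → ℝ}
    (hder : ∀ r : ℝ, ∀ s : ℝ, r < s → HasDerivAt (fun r' => F s r') (f s r) r)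
    {s b : ℝ} (hb : 0 < b)
    (hbound : ∀ h : ℝ, 0 < h → h ≤ b → d / 2 * F s (s - h) / h ≤ -f s (s - h)) :
    ∀ h : ℝ, 0 < h → h ≤ b → F s (s - h) ≤ F s (s - b) * (h / b) ^ (d / 2 : ℝ) := by
  intro h hh hhb
  set c : ℝ := d / 2 with hc
  have hcpos : 0 < c := by positivity
  set ψ : ℝ → ℝ := fun x => F s (s - x) * x ^ (-c : ℝ) with hψ
  have hPhi : ∀ x : ℝ, 0 < x →
      HasDerivAt (fun y => F s (s - y)) (-f s (s - x)) x := by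
    intro x hx
    have hinner : HasDerivAt (fun y : ℝ => s - y) (-1 : ℝ) x := by
      simpa using (hasDerivAt_id x).const_sub s
    have := (hder (s - x) s (by linarith)).comp x hinner
    simp only [mul_neg_one] at this; exact this
  have hψd : ∀ x : ℝ, 0 < x → HasDerivAt ψ
      ((-f s (s - x)) * x ^ (-c : ℝ) + F s (s - x) * (-c * x ^ (-c - 1 : ℝ))) x := by
    intro x hx
    have h1 := hPhi x hx
    have h2 : HasDerivAt (fun y : ℝ => y ^ (-c : ℝ)) (-c * x ^ (-c - 1 : ℝ)) x :=
      Real.hasDerivAt_rpow_const (Or.inl (ne_of_gt hx))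
    exact h1.mul h2
  have hmono : MonotoneOn ψ (Icc h b) := by
    apply monotoneOn_of_deriv_nonneg (convex_Icc h b)
    · apply ContinuousOn.mono (s := Icc h b) ?_ le_rfl
      intro x hx
      exact ((hψd x (lt_of_lt_of_le hh hx.1)).continuousAt).continuousWithinAt
    · intro x hx
      rw [interior_Icc] at hx
      exact ((hψd x (hh.trans hx.1)).differentiableAt).differentiableWithinAt
    · intro x hx
      rw [interior_Icc] at hx
      have hx0 : 0 < x := hh.trans hx.1
      rw [(hψd x hx0).deriv]
      have hb1 := hbound x hx0 (le_of_lt hx.2)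
      have hxc : (0:ℝ) < x ^ (-c : ℝ) := Real.rpow_pos_of_pos hx0 _
      have key : c * F s (s - x) / x * x ^ (-c : ℝ) ≤ (-f s (s - x)) * x ^ (-c : ℝ) :=
        mul_le_mul_of_nonneg_right hb1 (le_of_lt hxc)
      have hre : c * F s (s - x) / x * x ^ (-c : ℝ)
          = F s (s - x) * (c * x ^ (-c - 1 : ℝ)) := by
        rw [show (-c - 1 : ℝ) = -c + (-1) by ring, Real.rpow_add hx0,
          Real.rpow_neg_one]
        field_simp
      nlinarith [key, hre]
  have hψhb : ψ h ≤ ψ b :=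
    hmono (by constructor <;> linarith) (by constructor <;> linarith) hhb
  have hhc : (0:ℝ) < h ^ (c : ℝ) := Real.rpow_pos_of_pos hh _
  have h1 : F s (s - h) = ψ h * h ^ (c : ℝ) := by
    rw [hψ]; simp only []
    rw [mul_assoc, ← Real.rpow_add hh]
    simp
  have h2 : F s (s - b) * (h / b) ^ (c : ℝ) = ψ b * h ^ (c : ℝ) := by
    rw [hψ]; simp only []
    rw [Real.div_rpow (le_of_lt hh) (le_of_lt hb), Real.rpow_neg (le_of_lt hb)]
    field_simp
  rw [h1, h2]
  exact mul_le_mul_of_nonneg_right hψhb (le_of_lt hhc)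

lemma diag_zero {F : ℝ → ℝ → ℝ}
    (hcont : ContinuousOn (fun p : ℝ × ℝ => F p.1 p.2) Ebar)
    (hpos : ∀ p ∈ Etil, 0 < F p.1 p.2)
    {s c M b : ℝ} (hc : 0 < c) (hb : 0 < b)
    (hbd : ∀ h : ℝ, 0 < h → h ≤ b → F s (s - h) ≤ M * h ^ (c : ℝ)) :
    F s s = 0 := by
  have hpath : Tendsto (fun h : ℝ => ((s : ℝ), s - h)) (𝓝[>] 0) (𝓝[Ebar] (s, s)) := by
    rw [tendsto_nhdsWithin_iff]
    constructor
    · have : Tendsto (fun h : ℝ => ((s : ℝ), s - h)) (𝓝 0) (𝓝 (s, s - 0)) :=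
        (continuous_const.prodMk (continuous_const.sub continuous_id)).tendsto 0
      simpa using this.mono_left nhdsWithin_le_nhds
    · filter_upwards [self_mem_nhdsWithin] with h hh
      show s - h ≤ s
      simp only [mem_Ioi] at hh; linarith
  have T0 : Tendsto (fun h : ℝ => F s (s - h)) (𝓝[>] 0) (𝓝 (F s s)) :=
    (hcont (s, s) (le_refl s)).tendsto.comp hpath
  have Trpow : Tendsto (fun h : ℝ => M * h ^ (c : ℝ)) (𝓝[>] 0) (𝓝 0) := by
    have h1 : ContinuousAt (fun x : ℝ => x ^ (c : ℝ)) 0 :=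
      Real.continuousAt_rpow_const 0 c (Or.inr (le_of_lt hc))
    have h2 : Tendsto (fun h : ℝ => h ^ (c : ℝ)) (𝓝[>] 0) (𝓝 ((0:ℝ) ^ (c:ℝ))) :=
      (h1.tendsto).mono_left nhdsWithin_le_nhds
    rw [Real.zero_rpow (ne_of_gt hc)] at h2
    simpa using h2.const_mul M
  have Tlim : Tendsto (fun h : ℝ => F s (s - h)) (𝓝[>] 0) (𝓝 0) := by
    apply squeeze_zero'
    · filter_upwards [self_mem_nhdsWithin] with h hh
      exact le_of_lt (hpos (s, s - h) (by simpa [Etil] using (mem_Ioi.mp hh)))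
    · filter_upwards [Ioc_mem_nhdsGT_of_mem (by exact ⟨le_refl 0, hb⟩ : (0:ℝ) ∈ Ico 0 b)]
        with h hh
      exact hbd h hh.1 hh.2
    · exact Trpow
  exact tendsto_nhds_unique T0 Tlim


set_option maxHeartbeats 1000000 in
/-- Lemma 3.2: `lim_{δ↓0} sup_{0≤t≤1} |∫₀¹ |f_δ(t,v)| dv − 1/d| = 0`,
where `f_δ(t,v) = f(t+δ, t+δ−δv)/f(t+δ, t)` and `f = F^{(0,1)}`. -/
theorem fdelta_integral_tendsto
    (d : ℝ) (hd : d ∈ Set.Ioo (0:ℝ) 1) (F : ℝ → ℝ → ℝ)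
    (hF : SmoothVariation d 2 F) (f : ℝ → ℝ → ℝ) (hf : f = pderiv2 0 1 F) :
    ∀ ε > 0, ∃ δ₀ > 0, ∀ δ : ℝ, 0 < δ → δ < δ₀ → ∀ t ∈ Set.Icc (0:ℝ) 1,
      |(∫ v in (0:ℝ)..1, |f (t + δ) (t + δ - δ * v) / f (t + δ) t|) - 1 / d| < ε := by
  intro ε hε
  have hd0 : 0 < d := hd.1
  set ε₁ : ℝ := min (d/2) (ε * d^2 / 2) with hε₁def
  have hε₁pos : 0 < ε₁ := lt_min (by linarith) (by positivity)
  have hε₁d : ε₁ ≤ d/2 := min_le_left _ _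
  have hε₁e : ε₁ ≤ ε * d^2 / 2 := min_le_right _ _
  obtain ⟨h₀, hh₀pos, hcond⟩ := hF.condA (Icc 0 2) isCompact_Icc ε₁ hε₁pos
  refine ⟨min h₀ 1, lt_min hh₀pos one_pos, ?_⟩
  intro δ hδ hδlt t ht
  set s : ℝ := t + δ with hsdef
  have hδh₀ : δ < h₀ := lt_of_lt_of_le hδlt (min_le_left _ _)
  have hδ1 : δ < 1 := lt_of_lt_of_le hδlt (min_le_right _ _)
  have hsK : s ∈ Icc (0:ℝ) 2 := ⟨by simp only [hsdef]; linarith [ht.1], by simp only [hsdef]; linarith [ht.2]⟩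
  have hts : t < s := by simp only [hsdef]; linarith
  have hsubst : s - δ = t := by simp [hsdef]
  have hder : ∀ r s' : ℝ, r < s' → HasDerivAt (fun r' => F s' r') (f s' r) r := by
    intro r s' h
    rw [hf]; exact hasDerivAt_snd hF.mem.smooth h
  -- key estimates on f near the diagonal
  have key : ∀ h : ℝ, 0 < h → h ≤ δ →
      f s (s - h) < 0 ∧ d/2 * F s (s - h) / h ≤ -f s (s - h) ∧
        -f s (s - h) ≤ 3*d/2 * F s (s - h) / h := by
    intro h hh hhδ
    have hc := hcond h hh (lt_of_le_of_lt hhδ hδh₀) s hsK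
    rw [← hf] at hc
    have hFpos : 0 < F s (s - h) :=
      hF.mem.pos (s, s - h) (show s - h < s by linarith)
    rw [abs_lt] at hc
    have hfq : f s (s - h) = (h * f s (s - h) / F s (s - h)) * (F s (s - h) / h) := by
      field_simp
    have hq1 : h * f s (s - h) / F s (s - h) < -(d/2) := by linarith [hc.2]
    have hq2 : -(3*d/2) < h * f s (s - h) / F s (s - h) := by linarith [hc.1]
    have hFh : 0 < F s (s - h) / h := div_pos hFpos hh
    refine ⟨?_, ?_, ?_⟩
    · rw [hfq]
      exact mul_neg_of_neg_of_pos (by linarith) hFh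
    · have h1 := mul_le_mul_of_nonneg_right (le_of_lt hq1) (le_of_lt hFh)
      rw [← hfq] at h1
      ring_nf at h1 ⊢; linarith
    · have h1 := mul_le_mul_of_nonneg_right (le_of_lt hq2) (le_of_lt hFh)
      rw [← hfq] at h1
      ring_nf at h1 ⊢; linarith
  have hFpos_t : 0 < F s t := hF.mem.pos (s, t) hts
  have hfneg_t : f s t < 0 := by
    have := (key δ hδ le_rfl).1; rwa [hsubst] at this
  -- comparison bound
  have hcomp := comparison hd0 hder hδ (fun h hh hhδ => (key h hh hhδ).2.1)
  -- the unsigned integrand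
  set g : ℝ → ℝ := fun v => f s (s - δ * v) with hgdef
  have hvpos : ∀ v : ℝ, v ∈ Ioc (0:ℝ) 1 → 0 < δ * v ∧ δ * v ≤ δ := by
    intro v hv
    constructor
    · exact mul_pos hδ hv.1
    · nlinarith [hv.2, hδ]
  set C : ℝ := 3*d/2 * F s t / δ with hCdef
  have gbound : ∀ v ∈ Ioc (0:ℝ) 1, |g v| ≤ C * v ^ (d/2 - 1 : ℝ) := by
    intro v hv
    obtain ⟨hv1, hv2⟩ := hvpos v hv
    have hk := key (δ * v) hv1 hv2
    have e1 : F s (s - δ * v) ≤ F s t * v ^ (d/2 : ℝ) := by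
      have := hcomp (δ * v) hv1 hv2
      rw [hsubst] at this
      rwa [show δ * v / δ = v by field_simp] at this
    have habs : |g v| = -g v := abs_of_neg hk.1
    rw [habs]
    have e2 : -g v ≤ 3*d/2 * F s (s - δ * v) / (δ * v) := hk.2.2
    have e3 : 3*d/2 * F s (s - δ * v) / (δ * v) ≤ 3*d/2 * (F s t * v ^ (d/2:ℝ)) / (δ * v) := by
      gcongr
    have e4 : 3*d/2 * (F s t * v ^ (d/2:ℝ)) / (δ * v) = C * v ^ (d/2 - 1 : ℝ) := by
      have hvne : v ≠ 0 := ne_of_gt hv.1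
      have hδne : δ ≠ 0 := ne_of_gt hδ
      rw [Real.rpow_sub_one hvne, hCdef]
      field_simp
    linarith
  -- continuity of g on (0,1]
  have gcont : ContinuousOn g (Ioc 0 1) := by
    have hpath : ContinuousOn (fun v : ℝ => ((s:ℝ), s - δ * v)) (Ioc 0 1) :=
      (continuous_const.prodMk (continuous_const.sub (continuous_const.mul continuous_id))).continuousOn
    have hmaps : MapsTo (fun v : ℝ => ((s:ℝ), s - δ * v)) (Ioc 0 1) Etil := by
      intro v hv
      have := (hvpos v hv).1
      show s - δ * v < s
      linarith
    have := (fcont hF.mem.smooth).comp hpath hmaps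
    rw [hgdef, hf]
    exact this
  -- integrability
  have domInt : IntervalIntegrable (fun v : ℝ => C * v ^ (d/2 - 1 : ℝ)) volume 0 1 := by
    have := intervalIntegrable_rpow' (r := d/2 - 1) (by linarith) (a := (0:ℝ)) (b := 1)
    simpa using this.const_mul C
  have gInt : IntegrableOn g (Ioc 0 1) volume := by
    apply Integrable.mono'
      ((intervalIntegrable_iff_integrableOn_Ioc_of_le zero_le_one).mp domInt)
      (gcont.aestronglyMeasurable measurableSet_Ioc)
    rw [ae_restrict_iff' measurableSet_Ioc]
    filter_upwards with v hv
    simpa using gbound v hv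
  have gII : IntervalIntegrable g volume 0 1 :=
    (intervalIntegrable_iff_integrableOn_Ioc_of_le zero_le_one).mpr gInt
  -- FTC on [a,1]
  have ftc : ∀ a : ℝ, 0 < a → a ≤ 1 →
      ∫ v in a..1, g v = (F s (s - δ * a) - F s (s - δ)) / δ := by
    intro a ha ha1
    have hΦ : ∀ x ∈ uIcc a 1, HasDerivAt (fun y => -F s (s - δ * y) / δ) (g x) x := by
      intro x hx
      rw [uIcc_of_le ha1] at hx
      have hx0 : 0 < x := lt_of_lt_of_le ha hx.1
      have hinner : HasDerivAt (fun y : ℝ => s - δ * y) (-δ) x := by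
        simpa using ((hasDerivAt_id x).const_mul δ).const_sub s
      have h1 := (hder (s - δ * x) s (by nlinarith)).comp x hinner
      have h2 := (h1.neg).div_const δ
      have : -(f s (s - δ * x) * -δ) / δ = g x := by
        field_simp [hgdef]
        rfl
      rw [this] at h2
      exact h2
    have hsub : uIcc a 1 ⊆ uIcc (0:ℝ) 1 := by
      rw [uIcc_of_le ha1, uIcc_of_le zero_le_one]
      exact Icc_subset_Icc (le_of_lt ha) le_rfl
    have := intervalIntegral.integral_eq_sub_of_hasDerivAt hΦ (gII.mono_set hsub)
    rw [this]
    have hδne : δ ≠ 0 := ne_of_gt hδ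
    field_simp
    ring
  -- limit as a → 0+
  have hT1 : Tendsto (fun a => ∫ v in a..1, g v) (𝓝[>] (0:ℝ))
      (𝓝 (∫ v in (0:ℝ)..1, g v)) := by
    have hIcc : IntegrableOn g (uIcc 0 1) volume := by
      rw [uIcc_of_le zero_le_one, integrableOn_Icc_iff_integrableOn_Ioc]
      exact gInt
    have hprim : ContinuousOn (fun x => ∫ v in x..1, g v) (uIcc 0 1) :=
      continuousOn_primitive_interval_left hIcc
    have h0mem : (0:ℝ) ∈ uIcc (0:ℝ) 1 := by rw [uIcc_of_le zero_le_one]; exact ⟨le_rfl, zero_le_one⟩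
    have hcw : Tendsto (fun x => ∫ v in x..1, g v) (𝓝[uIcc (0:ℝ) 1] 0)
        (𝓝 (∫ v in (0:ℝ)..1, g v)) := hprim 0 h0mem
    refine hcw.mono_left ?_
    rw [uIcc_of_le zero_le_one, ← nhdsWithin_Ioc_eq_nhdsGT (zero_lt_one (α := ℝ))]
    exact nhdsWithin_mono 0 Ioc_subset_Icc_self
  -- F s s = 0
  have hdiag : F s s = 0 := by
    refine diag_zero hF.mem.cont hF.mem.pos (c := d/2) (M := F s t / δ ^ (d/2 : ℝ))
      (b := δ) (by linarith) hδ ?_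
    intro h hh hhδ
    have := hcomp h hh hhδ
    rw [hsubst, Real.div_rpow (le_of_lt hh) (le_of_lt hδ)] at this
    calc F s (s - h) ≤ F s t * (h ^ (d/2:ℝ) / δ ^ (d/2:ℝ)) := this
      _ = F s t / δ ^ (d/2:ℝ) * h ^ (d/2:ℝ) := by ring
  have hT2 : Tendsto (fun a : ℝ => (F s (s - δ * a) - F s (s - δ)) / δ) (𝓝[>] (0:ℝ))
      (𝓝 ((0 - F s t) / δ)) := by
    have hpath : Tendsto (fun a : ℝ => ((s : ℝ), s - δ * a)) (𝓝[>] (0:ℝ)) (𝓝[Ebar] (s, s)) := by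
      rw [tendsto_nhdsWithin_iff]
      constructor
      · have : Tendsto (fun a : ℝ => ((s : ℝ), s - δ * a)) (𝓝 0) (𝓝 (s, s - δ * 0)) :=
          (continuous_const.prodMk
            (continuous_const.sub (continuous_const.mul continuous_id))).tendsto 0
        simpa using this.mono_left nhdsWithin_le_nhds
      · filter_upwards [self_mem_nhdsWithin] with a ha
        show s - δ * a ≤ s
        have : 0 < a := ha
        nlinarith
    have hc1 : Tendsto (fun a : ℝ => F s (s - δ * a)) (𝓝[>] (0:ℝ)) (𝓝 (F s s)) :=
      (hF.mem.cont (s, s) (le_refl s)).tendsto.comp hpath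
    rw [hdiag] at hc1
    have hconst : Tendsto (fun _ : ℝ => F s (s - δ)) (𝓝[>] (0:ℝ)) (𝓝 (F s (s - δ))) :=
      tendsto_const_nhds
    have hc2 := (hc1.sub hconst).div_const δ
    rw [show F s t = F s (s - δ) from by rw [hsubst]]
    exact hc2
  have heq : ∫ v in (0:ℝ)..1, g v = (0 - F s t) / δ := by
    refine tendsto_nhds_unique (hT1.congr' ?_) hT2
    filter_upwards [Ioc_mem_nhdsGT_of_mem (by exact ⟨le_rfl, zero_lt_one⟩ : (0:ℝ) ∈ Ico 0 1)]
      with a ha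
    exact ftc a ha.1 ha.2
  -- rewrite the target integral
  have hIeq : (∫ v in (0:ℝ)..1, |f s (s - δ * v) / f s t|)
      = (∫ v in (0:ℝ)..1, g v) / f s t := by
    rw [← intervalIntegral.integral_div]
    apply intervalIntegral.integral_congr_ae
    have : uIoc (0:ℝ) 1 = Ioc (0:ℝ) 1 := uIoc_of_le zero_le_one
    filter_upwards with v hv
    rw [this] at hv
    have h1 : f s (s - δ * v) < 0 := (key (δ * v) (hvpos v hv).1 (hvpos v hv).2).1
    rw [abs_of_nonneg (le_of_lt (div_pos_of_neg_of_neg h1 hfneg_t))]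
  rw [hIeq, heq]
  -- final estimate via condition (a) at h = δ
  have hcδ := hcond δ hδ hδh₀ s hsK
  rw [← hf, hsubst] at hcδ
  set x : ℝ := -(δ * f s t / F s t) with hxdef
  have hval : (0 - F s t) / δ / f s t = 1 / x := by
    rw [hxdef]
    rw [div_div, one_div, ← neg_inv, inv_div]
    field_simp
    ring
  rw [hval]
  rw [abs_lt] at hcδ
  have hx1 : d - ε₁ < x := by rw [hxdef]; linarith [hcδ.2]
  have hx2 : x < d + ε₁ := by rw [hxdef]; linarith [hcδ.1]
  have hxpos : d/2 < x := by linarith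
  have hx0 : (0:ℝ) < x := by linarith
  have hxd : 0 < x * d := mul_pos hx0 hd0
  have habs2 : |1 / x - 1 / d| = |d - x| / (x * d) := by
    rw [div_sub_div _ _ (ne_of_gt hx0) (ne_of_gt hd0), abs_div, abs_of_pos hxd]
    norm_num
  rw [habs2]
  rw [div_lt_iff₀ hxd]
  have h5 : |d - x| < ε₁ := by
    rw [abs_lt]; constructor <;> linarith
  have h6 : ε₁ ≤ ε * (x * d) := by
    calc ε₁ ≤ ε * d^2 / 2 := hε₁e
      _ = ε * (d/2 * d) := by ring
      _ ≤ ε * (x * d) := by nlinarith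
  linarith
end
end
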